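/- Let p_g(y|x) = σ(g(x))^y (1−σ(g(x)))^{1−y} with σ(t) = 1/(1+e^{−t}), for binary y ∈ {0,1}. If there exists δ > 0 such that δ ≤ σ(g(x)) ≤ 1−δ and δ ≤ σ(f(x)) ≤ 1−δ for all x, then there is a constant c > 0 depending only on δ such that E[log(p_f(Y|X)/p_g(Y|X))] ≥ c·E[(g(X)−f(X))^2], where (X,Y) is distributed with Y|X ~ Bernoulli(σ(f(X))). -/

import Mathlib

open MeasureTheory

/-- The sigmoid function `σ(t) = 1/(1+e^{−t})`. -/
noncomputable def sigmoid (t : ℝ) : ℝ := 1 / (1 + Real.exp (-t))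

/-- The Bernoulli conditional density `p_g(y|x) = σ(g(x))^y (1−σ(g(x)))^{1−y}`. -/
noncomputable def bernDensity {𝒳 : Type*} (g : 𝒳 → ℝ) (x : 𝒳) (y : ℝ) : ℝ :=
  Real.rpow (sigmoid (g x)) y * Real.rpow (1 - sigmoid (g x)) (1 - y)

lemma sigmoid_pos (t : ℝ) : 0 < sigmoid t := by unfold sigmoid; positivity

lemma sigmoid_lt_one (t : ℝ) : sigmoid t < 1 := by
  unfold sigmoid
  rw [div_lt_one (by positivity)]
  linarith [Real.exp_pos (-t)]

lemma one_sub_sigmoid (t : ℝ) : 1 - sigmoid t = Real.exp (-t) / (1 + Real.exp (-t)) := by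
  unfold sigmoid
  have h : (1 : ℝ) + Real.exp (-t) ≠ 0 := by positivity
  field_simp
  ring

lemma sigmoid_mono : Monotone sigmoid := by
  intro a b hab
  unfold sigmoid
  have h1 : (0:ℝ) < 1 + Real.exp (-b) := by positivity
  have := Real.exp_le_exp.2 (neg_le_neg hab)
  apply one_div_le_one_div_of_le h1
  linarith

lemma hasDerivAt_sigmoid (t : ℝ) :
    HasDerivAt sigmoid (sigmoid t * (1 - sigmoid t)) t := by
  have h : HasDerivAt (fun s : ℝ => 1 + Real.exp (-s)) (-Real.exp (-t)) t := by
    have := ((Real.hasDerivAt_exp (-t)).comp t (hasDerivAt_neg t))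
    simpa using this.const_add 1
  have h0 : (1 + Real.exp (-t)) ≠ 0 := by positivity
  have := h.inv h0
  have heq : sigmoid = fun s => (1 + Real.exp (-s))⁻¹ := by
    funext s; rw [sigmoid, one_div]
  rw [heq]
  refine this.congr_deriv ?_
  rw [← heq, one_sub_sigmoid, sigmoid]
  field_simp

lemma sigmoid_diff : Differentiable ℝ sigmoid :=
  fun t => (hasDerivAt_sigmoid t).differentiableAt

lemma sigmoid_gap {δ a b : ℝ} (hab : a ≤ b) (ha : δ ≤ sigmoid a) (hb : sigmoid b ≤ 1 - δ) :
    δ * (1 - δ) * (b - a) ≤ sigmoid b - sigmoid a := by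
  set h : ℝ → ℝ := fun t => sigmoid t - δ * (1 - δ) * t with hh
  have hder : ∀ t, HasDerivAt h (sigmoid t * (1 - sigmoid t) - δ * (1 - δ)) t := by
    intro t
    have := (hasDerivAt_sigmoid t).sub ((hasDerivAt_id t).const_mul (δ * (1 - δ)))
    simp only [mul_one] at this
    exact this
  have hmono : MonotoneOn h (Set.Icc a b) := by
    apply monotoneOn_of_deriv_nonneg (convex_Icc a b)
    · exact (sigmoid_diff.sub (differentiable_id.const_mul _)).continuous.continuousOn
    · intro t _; exact (hder t).differentiableAt.differentiableWithinAt
    · intro t ht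
      rw [interior_Icc] at ht
      rw [(hder t).deriv]
      have h1 : δ ≤ sigmoid t := le_trans ha (sigmoid_mono ht.1.le)
      have h2 : sigmoid t ≤ 1 - δ := le_trans (sigmoid_mono ht.2.le) hb
      nlinarith
  have := hmono (Set.left_mem_Icc.2 hab) (Set.right_mem_Icc.2 hab) hab
  simp only [hh] at this
  linarith

lemma kl_pointwise {δ a b : ℝ}
    (ha1 : δ ≤ sigmoid a) (ha2 : sigmoid a ≤ 1 - δ)
    (hb1 : δ ≤ sigmoid b) (hb2 : sigmoid b ≤ 1 - δ) :
    δ * (1 - δ) / 2 * (b - a) ^ 2 ≤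
      sigmoid a * (Real.log (sigmoid a) - Real.log (sigmoid b))
      + (1 - sigmoid a) * (Real.log (1 - sigmoid a) - Real.log (1 - sigmoid b)) := by
  set G : ℝ → ℝ := fun t =>
    sigmoid a * (Real.log (sigmoid a) - Real.log (sigmoid t))
      + (1 - sigmoid a) * (Real.log (1 - sigmoid a) - Real.log (1 - sigmoid t))
      - δ * (1 - δ) / 2 * (t - a) ^ 2 with hG
  have hGa : G a = 0 := by simp [hG]
  have hder : ∀ t, HasDerivAt G (sigmoid t - sigmoid a - δ * (1 - δ) * (t - a)) t := by
    intro t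
    have hst := hasDerivAt_sigmoid t
    have h1 : (0:ℝ) < sigmoid t := sigmoid_pos t
    have h2 : (0:ℝ) < 1 - sigmoid t := by linarith [sigmoid_lt_one t]
    have hlog1 : HasDerivAt (fun s => Real.log (sigmoid s))
        (sigmoid t * (1 - sigmoid t) / sigmoid t) t := hst.log h1.ne'
    have hlog2 : HasDerivAt (fun s => Real.log (1 - sigmoid s))
        (-(sigmoid t * (1 - sigmoid t)) / (1 - sigmoid t)) t := by
      simpa using ((hasDerivAt_const t (1:ℝ)).sub hst).log h2.ne'
    have hsq : HasDerivAt (fun s : ℝ => δ * (1 - δ) / 2 * (s - a) ^ 2)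
        (δ * (1 - δ) / 2 * (2 * (t - a))) t := by
      have : HasDerivAt (fun s : ℝ => (s - a) ^ 2) (2 * (t - a) ^ 1 * 1) t :=
        ((hasDerivAt_id t).sub_const a).pow 2
      simpa [mul_comm] using this.const_mul (δ * (1 - δ) / 2)
    have := (((hlog1.const_mul (sigmoid a)).neg.const_add
        (sigmoid a * Real.log (sigmoid a))).add
        ((hlog2.const_mul (1 - sigmoid a)).neg.const_add
        ((1 - sigmoid a) * Real.log (1 - sigmoid a)))).sub hsq
    refine (this.congr_deriv ?_).congr_of_eventuallyEq (Filter.Eventually.of_forall fun s => ?_)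
    · field_simp
      ring
    · simp [hG]; ring
  rcases le_total a b with hab | hab
  · have hmono : MonotoneOn G (Set.Icc a b) := by
      apply monotoneOn_of_deriv_nonneg (convex_Icc a b)
      · exact Continuous.continuousOn (continuous_iff_continuousAt.2
          (fun t => (hder t).continuousAt))
      · intro t _; exact (hder t).differentiableAt.differentiableWithinAt
      · intro t ht
        rw [interior_Icc] at ht
        rw [(hder t).deriv]
        have := sigmoid_gap ht.1.le ha1 (le_trans (sigmoid_mono ht.2.le) hb2)
        linarith
    have := hmono (Set.left_mem_Icc.2 hab) (Set.right_mem_Icc.2 hab) hab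
    rw [hGa] at this
    simp only [hG] at this
    linarith
  · have hmono : AntitoneOn G (Set.Icc b a) := by
      apply antitoneOn_of_deriv_nonpos (convex_Icc b a)
      · exact (Continuous.continuousOn (continuous_iff_continuousAt.2
          (fun t => (hder t).continuousAt)))
      · intro t _; exact (hder t).differentiableAt.differentiableWithinAt
      · intro t ht
        rw [interior_Icc] at ht
        rw [(hder t).deriv]
        have := sigmoid_gap ht.2.le (le_trans hb1 (sigmoid_mono ht.1.le)) ha2
        linarith
    have := hmono (Set.left_mem_Icc.2 hab) (Set.right_mem_Icc.2 hab) hab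
    rw [hGa] at this
    simp only [hG] at this
    linarith

lemma sigmoid_continuous : Continuous sigmoid := sigmoid_diff.continuous

/-- KL lower bound for logistic regression: if `σ(g)`, `σ(f)` are uniformly in
`[δ, 1−δ]` then there is `c > 0` depending only on `δ` with
`E[log(p_f(Y|X)/p_g(Y|X))] ≥ c · E[(g(X)−f(X))²]`, where `Y|X ~ Bernoulli(σ(f(X)))`. -/
theorem kl_lower_bound_logistic {Ω 𝒳 : Type*} [MeasurableSpace Ω] [MeasurableSpace 𝒳]
    (δ : ℝ) (hδ : 0 < δ) :
    ∃ c > (0 : ℝ), ∀ (μ : Measure Ω), IsProbabilityMeasure μ →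
      ∀ (X : Ω → 𝒳) (Y : Ω → ℝ) (f g : 𝒳 → ℝ),
      Measurable X → Measurable Y → Measurable f → Measurable g →
      (∀ ω, Y ω = 0 ∨ Y ω = 1) →
      (∀ x, δ ≤ sigmoid (g x) ∧ sigmoid (g x) ≤ 1 - δ) →
      (∀ x, δ ≤ sigmoid (f x) ∧ sigmoid (f x) ≤ 1 - δ) →
      ((fun ω => sigmoid (f (X ω))) =ᵐ[μ] μ[Y | MeasurableSpace.comap X inferInstance]) →
      MemLp (fun ω => f (X ω)) 2 μ → MemLp (fun ω => g (X ω)) 2 μ →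
      c * ∫ ω, (g (X ω) - f (X ω)) ^ 2 ∂μ
        ≤ ∫ ω, Real.log (bernDensity f (X ω) (Y ω) / bernDensity g (X ω) (Y ω)) ∂μ := by
  classical
  set δ' : ℝ := min δ (1/2) with hδ'def
  have hδ'pos : 0 < δ' := lt_min hδ (by norm_num)
  have hδ'half : δ' ≤ 1/2 := min_le_right _ _
  have hδ'δ : δ' ≤ δ := min_le_left _ _
  refine ⟨δ' * (1 - δ') / 2, by nlinarith, ?_⟩
  intro μ hμ X Y f g hX hY hf hg hY01 hgb hfb hcond hfL2 hgL2
  haveI := hμ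
  -- bounds with δ'
  have hfb' : ∀ x, δ' ≤ sigmoid (f x) ∧ sigmoid (f x) ≤ 1 - δ' :=
    fun x => ⟨le_trans hδ'δ (hfb x).1, le_trans (hfb x).2 (by linarith)⟩
  have hgb' : ∀ x, δ' ≤ sigmoid (g x) ∧ sigmoid (g x) ≤ 1 - δ' :=
    fun x => ⟨le_trans hδ'δ (hgb x).1, le_trans (hgb x).2 (by linarith)⟩
  have hm : MeasurableSpace.comap X inferInstance ≤ _ := hX.comap_le
  set A : 𝒳 → ℝ := fun x => Real.log (sigmoid (f x)) - Real.log (sigmoid (g x)) with hA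
  set B : 𝒳 → ℝ := fun x => Real.log (1 - sigmoid (f x)) - Real.log (1 - sigmoid (g x)) with hB
  set C : 𝒳 → ℝ := fun x => A x - B x with hC
  set K : 𝒳 → ℝ := fun x =>
    sigmoid (f x) * A x + (1 - sigmoid (f x)) * B x with hK
  set M : ℝ := Real.log (1 - δ') - Real.log δ' with hM
  have hM0 : 0 ≤ M := by
    rw [hM]; have := Real.log_le_log hδ'pos (by linarith : δ' ≤ 1 - δ'); linarith
  have hlog_mem : ∀ (t : ℝ), δ' ≤ t → t ≤ 1 - δ' →
      Real.log δ' ≤ Real.log t ∧ Real.log t ≤ Real.log (1 - δ') := by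
    intro t h1 h2
    exact ⟨Real.log_le_log hδ'pos h1, Real.log_le_log (by linarith) h2⟩
  have hAbd : ∀ x, |A x| ≤ M := by
    intro x
    obtain ⟨l1, l2⟩ := hlog_mem _ (hfb' x).1 (hfb' x).2
    obtain ⟨l3, l4⟩ := hlog_mem _ (hgb' x).1 (hgb' x).2
    rw [abs_le]; constructor <;> simp only [hA, hM] <;> linarith
  have hone_sub : ∀ y : 𝒳 → ℝ, (∀ x, δ' ≤ sigmoid (y x) ∧ sigmoid (y x) ≤ 1 - δ') →
      ∀ x, δ' ≤ 1 - sigmoid (y x) ∧ 1 - sigmoid (y x) ≤ 1 - δ' := by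
    intro y hy x; exact ⟨by linarith [(hy x).2], by linarith [(hy x).1]⟩
  have hBbd : ∀ x, |B x| ≤ M := by
    intro x
    obtain ⟨l1, l2⟩ := hlog_mem _ ((hone_sub f hfb') x).1 ((hone_sub f hfb') x).2
    obtain ⟨l3, l4⟩ := hlog_mem _ ((hone_sub g hgb') x).1 ((hone_sub g hgb') x).2
    rw [abs_le]; constructor <;> simp only [hB, hM] <;> linarith
  have hCbd : ∀ x, |C x| ≤ 2 * M := by
    intro x
    calc |C x| ≤ |A x| + |B x| := abs_sub _ _
    _ ≤ 2 * M := by linarith [hAbd x, hBbd x]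
  have hKbd : ∀ x, |K x| ≤ 2 * M := by
    intro x
    have h1 : (0:ℝ) ≤ sigmoid (f x) := (sigmoid_pos _).le
    have h2 : sigmoid (f x) ≤ 1 := (sigmoid_lt_one _).le
    calc |K x| ≤ sigmoid (f x) * |A x| + (1 - sigmoid (f x)) * |B x| := by
          rw [hK]
          refine le_trans (abs_add_le _ _) ?_
          rw [abs_mul, abs_mul, abs_of_nonneg h1, abs_of_nonneg (by linarith : (0:ℝ) ≤ 1 - sigmoid (f x))]
    _ ≤ 2 * M := by nlinarith [hAbd x, hBbd x]
  -- measurability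
  have hsig : Measurable sigmoid := sigmoid_continuous.measurable
  have hAme : Measurable A :=
    (Real.measurable_log.comp (hsig.comp hf)).sub (Real.measurable_log.comp (hsig.comp hg))
  have hBme : Measurable B :=
    (Real.measurable_log.comp ((measurable_const.sub (hsig.comp hf))))
      |>.sub (Real.measurable_log.comp ((measurable_const.sub (hsig.comp hg))))
  have hCme : Measurable C := hAme.sub hBme
  have hKme : Measurable K :=
    ((hsig.comp hf).mul hAme).add ((measurable_const.sub (hsig.comp hf)).mul hBme)
  have int_of_bdd : ∀ (h : Ω → ℝ) (Cb : ℝ), Measurable h → (∀ ω, |h ω| ≤ Cb) →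
      Integrable h μ := by
    intro h Cb hme hbd
    exact (integrable_const Cb).mono' hme.aestronglyMeasurable
      (Filter.Eventually.of_forall (by simpa [Real.norm_eq_abs] using hbd))
  have hYbd : ∀ ω, |Y ω| ≤ 1 := by
    intro ω; rcases hY01 ω with h | h <;> rw [h] <;> norm_num
  have hintY : Integrable Y μ := int_of_bdd Y 1 hY hYbd
  set CX : Ω → ℝ := fun ω => C (X ω) with hCX
  set BX : Ω → ℝ := fun ω => B (X ω) with hBX
  have hintCXY : Integrable (CX * Y) μ := by
    apply int_of_bdd _ (2 * M) ((hCme.comp hX).mul hY)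
    intro ω
    calc |(CX * Y) ω| = |CX ω| * |Y ω| := abs_mul _ _
    _ ≤ 2 * M * 1 := mul_le_mul (hCbd _) (hYbd ω) (abs_nonneg _) (by linarith [hCbd (X ω)])
    _ = 2 * M := by ring
  have hintBX : Integrable BX μ := int_of_bdd _ M (hBme.comp hX) (fun ω => hBbd _)
  have hintKX : Integrable (fun ω => K (X ω)) μ :=
    int_of_bdd _ (2 * M) (hKme.comp hX) (fun ω => hKbd _)
  have hintfCX : Integrable (fun ω => sigmoid (f (X ω)) * CX ω) μ := by
    apply int_of_bdd _ (2 * M) (((hsig.comp hf).comp hX).mul (hCme.comp hX))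
    intro ω
    show |sigmoid (f (X ω)) * CX ω| ≤ 2 * M
    rw [abs_mul]
    have h2 : |sigmoid (f (X ω))| ≤ 1 := by
      rw [abs_of_nonneg (sigmoid_pos _).le]; exact (sigmoid_lt_one _).le
    calc |sigmoid (f (X ω))| * |CX ω| ≤ 1 * (2 * M) :=
          mul_le_mul h2 (hCbd _) (abs_nonneg _) zero_le_one
    _ = 2 * M := by ring
  -- pointwise identity for the log-likelihood ratio
  have hpt : ∀ ω, Real.log (bernDensity f (X ω) (Y ω) / bernDensity g (X ω) (Y ω))
      = (CX * Y) ω + BX ω := by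
    intro ω
    have hfxpos : (0:ℝ) < sigmoid (f (X ω)) := sigmoid_pos _
    have hgxpos : (0:ℝ) < sigmoid (g (X ω)) := sigmoid_pos _
    have hfx1 : (0:ℝ) < 1 - sigmoid (f (X ω)) := by linarith [sigmoid_lt_one (f (X ω))]
    have hgx1 : (0:ℝ) < 1 - sigmoid (g (X ω)) := by linarith [sigmoid_lt_one (g (X ω))]
    have hrp : ∀ a b : ℝ, Real.rpow a b = a ^ b := fun _ _ => rfl
    rcases hY01 ω with h | h <;> rw [h] <;>
      simp only [bernDensity, hrp, Real.rpow_zero, Real.rpow_one, sub_zero, sub_self,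
        one_mul, mul_one, Pi.mul_apply, hCX, hBX, hC, hA, hB, h]
    · rw [Real.log_div hfx1.ne' hgx1.ne']; ring
    · rw [Real.log_div hfxpos.ne' hgxpos.ne']; ring
  -- conditional expectation step
  haveI : SigmaFinite (μ.trim hm) := by infer_instance
  have hXm : Measurable[MeasurableSpace.comap X inferInstance] X :=
    Measurable.of_comap_le le_rfl
  have hCX_sm : StronglyMeasurable[MeasurableSpace.comap X inferInstance] CX :=
    (hCme.comp hXm).stronglyMeasurable
  have hpull : μ[CX * Y | MeasurableSpace.comap X inferInstance] =ᵐ[μ]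
      CX * μ[Y | MeasurableSpace.comap X inferInstance] :=
    condExp_mul_of_stronglyMeasurable_left hCX_sm hintCXY hintY
  have hstep : ∫ ω, (CX * Y) ω ∂μ = ∫ ω, sigmoid (f (X ω)) * CX ω ∂μ := by
    rw [← integral_condExp (μ := μ) (f := CX * Y) hm]
    rw [integral_congr_ae hpull]
    apply integral_congr_ae
    filter_upwards [hcond] with ω hω
    simp only [Pi.mul_apply, ← hω]
    ring
  -- assemble
  have eq1 : ∫ ω, Real.log (bernDensity f (X ω) (Y ω) / bernDensity g (X ω) (Y ω)) ∂μ
      = ∫ ω, K (X ω) ∂μ := by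
    calc ∫ ω, Real.log (bernDensity f (X ω) (Y ω) / bernDensity g (X ω) (Y ω)) ∂μ
        = ∫ ω, ((CX * Y) ω + BX ω) ∂μ := by exact integral_congr_ae (Filter.Eventually.of_forall hpt)
    _ = (∫ ω, (CX * Y) ω ∂μ) + ∫ ω, BX ω ∂μ := integral_add hintCXY hintBX
    _ = (∫ ω, sigmoid (f (X ω)) * CX ω ∂μ) + ∫ ω, BX ω ∂μ := by rw [hstep]
    _ = ∫ ω, (sigmoid (f (X ω)) * CX ω + BX ω) ∂μ := (integral_add hintfCX hintBX).symm
    _ = ∫ ω, K (X ω) ∂μ := by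
        apply integral_congr_ae
        apply Filter.Eventually.of_forall
        intro ω
        simp only [hCX, hBX, hK, hC]
        ring
  rw [eq1]
  have hintsq : Integrable (fun ω => (g (X ω) - f (X ω)) ^ 2) μ := (hgL2.sub hfL2).integrable_sq
  rw [← integral_const_mul]
  apply integral_mono (hintsq.const_mul _) hintKX
  intro ω
  have := kl_pointwise (δ := δ') (a := f (X ω)) (b := g (X ω))
    (hfb' _).1 (hfb' _).2 (hgb' _).1 (hgb' _).2
  simpa [hK, hA, hB] using this
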